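/- Let k ≥ 1 and n ≥ 1. Let w : {1,…,n} → {0,1}^{2k} be such that every w_i has exactly k coordinates equal to 1 (Σ_{a=1}^{2k} w_i(a) = k). Define the bilinear form ⟨x, y⟩ = Σ_{a=1}^{2k} x_a y_a − (Σ_a x_a)(Σ_a y_a)/(2k) on ℝ^{2k}, let ρ ∈ ℝ^{2k} have coordinates ρ_a = (2k − 2a + 1)/2, set Λ = Σ_{i=1}^n w_i, and define F(w) = ⟨Λ, Λ⟩ + 2 ⟨Λ, ρ⟩. Then F(w) ≤ n² k / 2 + n k², and equality holds if and only if every w_i equals the vector (1,…,1,0,…,0) with 1 in the first k coordinates and 0 in the last k coordinates. -/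
import Mathlib


/-- The bilinear form `⟨x, y⟩ = Σ_a x_a y_a − (Σ_a x_a)(Σ_a y_a)/(2k)` on `ℝ^{2k}`,
induced by the Killing form of `su(2k)` in the standard (overcomplete) basis. -/
noncomputable def su2kForm (k : ℕ) (x y : Fin (2 * k) → ℝ) : ℝ :=
  (∑ a, x a * y a) - (∑ a, x a) * (∑ a, y a) / (2 * (k : ℝ))

/-- The Weyl vector of `su(2k)`: `ρ_a = (2k − 2a + 1)/2` for `a = 1, …, 2k`
(in `0`-indexed form, `ρ a = (2k − 2a − 1)/2`). -/
noncomputable def su2kRho (k : ℕ) : Fin (2 * k) → ℝ :=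
  fun a => (2 * (k : ℝ) - 2 * ((a : ℕ) : ℝ) - 1) / 2

lemma sum_range_cast_id (m : ℕ) : ∑ i ∈ Finset.range m, (i : ℝ) = m * (m - 1) / 2 := by
  induction m with
  | zero => simp
  | succ m ih => rw [Finset.sum_range_succ, ih]; push_cast; ring

lemma sum_lin (c : ℝ) (m : ℕ) :
    ∑ i ∈ Finset.range m, (c - 2 * (i : ℝ) - 1) = m * c - m * (m - 1) - m := by
  rw [show (fun i : ℕ => c - 2 * (i:ℝ) - 1) = (fun i : ℕ => (c - 1) - 2 * (i:ℝ)) from by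
    funext i; ring]
  rw [Finset.sum_sub_distrib, ← Finset.mul_sum, sum_range_cast_id, Finset.sum_const,
    Finset.card_range, nsmul_eq_mul]
  ring

/-- Weight-maximization for the `su(2k)` weights at half filling.  Let `k, n ≥ 1` and
let `w : Fin n → {0,1}^{2k}` with each `wᵢ` having exactly `k` coordinates equal to `1`.
With `Λ = Σᵢ wᵢ` and `F(w) = ⟨Λ, Λ⟩ + 2⟨Λ, ρ⟩`, we have `F(w) ≤ n²k/2 + nk²`, with
equality iff every `wᵢ` equals the vector `(1,…,1,0,…,0)` with `1` in the first `k`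
coordinates and `0` in the last `k` coordinates. -/
theorem stmt16 {k n : ℕ} (hk : 1 ≤ k) (hn : 1 ≤ n)
    (w : Fin n → Fin (2 * k) → ℝ)
    (hw01 : ∀ i a, w i a = 0 ∨ w i a = 1)
    (hwk : ∀ i, (∑ a, w i a) = (k : ℝ)) :
    su2kForm k (fun a => ∑ i, w i a) (fun a => ∑ i, w i a)
        + 2 * su2kForm k (fun a => ∑ i, w i a) (su2kRho k)
      ≤ (n : ℝ) ^ 2 * k / 2 + (n : ℝ) * (k : ℝ) ^ 2
    ∧ (su2kForm k (fun a => ∑ i, w i a) (fun a => ∑ i, w i a)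
          + 2 * su2kForm k (fun a => ∑ i, w i a) (su2kRho k)
        = (n : ℝ) ^ 2 * k / 2 + (n : ℝ) * (k : ℝ) ^ 2
      ↔ ∀ i a, w i a = if (a : ℕ) < k then 1 else 0) := by
  have hk0 : (0:ℝ) < (k:ℝ) := by exact_mod_cast hk
  have hn0 : (0:ℝ) < (n:ℝ) := by exact_mod_cast hn
  set L : Fin (2*k) → ℝ := fun a => ∑ i, w i a with hLdef
  set ρ : Fin (2*k) → ℝ := su2kRho k with hρdef
  -- basic bounds on L
  have hL0 : ∀ a, 0 ≤ L a := by
    intro a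
    exact Finset.sum_nonneg fun i _ => by rcases hw01 i a with h | h <;> simp [h]
  have hLn : ∀ a, L a ≤ (n:ℝ) := by
    intro a
    calc L a ≤ ∑ _i : Fin n, (1:ℝ) :=
          Finset.sum_le_sum fun i _ => by rcases hw01 i a with h | h <;> simp [h]
      _ = n := by simp
  have hS : ∑ a, L a = (n:ℝ) * k := by
    rw [show (∑ a, L a) = ∑ a, ∑ i, w i a from rfl, Finset.sum_comm]
    simp [hwk, Finset.sum_const, mul_comm]
  have hρsum : ∑ a, ρ a = 0 := by
    rw [hρdef]
    unfold su2kRho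
    rw [Fin.sum_univ_eq_sum_range (fun i : ℕ => (2*(k:ℝ) - 2*(i:ℝ) - 1)/2) (2*k),
      ← Finset.sum_div, sum_lin]
    push_cast
    ring
  -- the main rewriting of the form
  have hform : su2kForm k L L + 2 * su2kForm k L ρ
      = (∑ a, (L a ^ 2 + 2 * (L a * ρ a))) - (n:ℝ)^2 * k / 2 := by
    unfold su2kForm
    rw [hS, hρsum]
    have h1 : ∑ a, (L a ^ 2 + 2 * (L a * ρ a))
        = ∑ a, L a * L a + 2 * ∑ a, L a * ρ a := by
      rw [Finset.sum_add_distrib, Finset.mul_sum]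
      congr 1
      exact Finset.sum_congr rfl fun a _ => by ring
    rw [h1]
    have hkne : (k:ℝ) ≠ 0 := ne_of_gt hk0
    field_simp
    ring
  -- the majorant
  set v : Fin (2*k) → ℝ :=
    fun a => (n:ℝ) * L a + (if (a:ℕ) < k then (n:ℝ)*(2*(k:ℝ) - 2*((a:ℕ):ℝ) - 1) else 0)
    with hvdef
  have hρval : ∀ a : Fin (2*k), 2 * ρ a = 2*(k:ℝ) - 2*((a:ℕ):ℝ) - 1 := by
    intro a; rw [hρdef]; unfold su2kRho; ring
  have hterm1 : ∀ a, L a ^ 2 ≤ (n:ℝ) * L a := by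
    intro a
    have := mul_le_mul_of_nonneg_right (hLn a) (hL0 a)
    nlinarith [hL0 a, hLn a]
  have hterm2 : ∀ a : Fin (2*k),
      2 * (L a * ρ a) ≤ (if (a:ℕ) < k then (n:ℝ)*(2*(k:ℝ) - 2*((a:ℕ):ℝ) - 1) else 0) := by
    intro a
    have h2 : 2 * (L a * ρ a) = L a * (2*(k:ℝ) - 2*((a:ℕ):ℝ) - 1) := by
      rw [← hρval a]; ring
    by_cases hak : (a:ℕ) < k
    · have hc : ((a:ℕ):ℝ) + 1 ≤ (k:ℝ) := by exact_mod_cast hak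
      rw [if_pos hak, h2]
      exact mul_le_mul_of_nonneg_right (hLn a) (by linarith)
    · have hc : (k:ℝ) ≤ ((a:ℕ):ℝ) := by exact_mod_cast Nat.le_of_not_lt hak
      rw [if_neg hak, h2]
      exact mul_nonpos_of_nonneg_of_nonpos (hL0 a) (by linarith)
  have hterm : ∀ a ∈ Finset.univ, L a ^ 2 + 2 * (L a * ρ a) ≤ v a := by
    intro a _
    rw [hvdef]
    exact add_le_add (hterm1 a) (hterm2 a)
  -- sum of the majorant
  have hsumv : ∑ a, v a = (n:ℝ)^2 * k + (n:ℝ) * (k:ℝ)^2 := by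
    rw [hvdef]
    simp only
    rw [Finset.sum_add_distrib, ← Finset.mul_sum, hS]
    have hIte : ∑ a : Fin (2*k),
        (if (a:ℕ) < k then (n:ℝ)*(2*(k:ℝ) - 2*((a:ℕ):ℝ) - 1) else 0)
        = (n:ℝ) * (k:ℝ)^2 := by
      rw [Fin.sum_univ_eq_sum_range
        (fun i : ℕ => if i < k then (n:ℝ)*(2*(k:ℝ) - 2*(i:ℝ) - 1) else 0) (2*k)]
      rw [← Finset.sum_range_add_sum_Ico _ (by omega : k ≤ 2*k)]
      have h1 : ∑ i ∈ Finset.range k,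
          (if i < k then (n:ℝ)*(2*(k:ℝ) - 2*(i:ℝ) - 1) else 0)
          = ∑ i ∈ Finset.range k, (n:ℝ)*(2*(k:ℝ) - 2*(i:ℝ) - 1) := by
        refine Finset.sum_congr rfl fun i hi => ?_
        rw [if_pos (Finset.mem_range.mp hi)]
      have h2 : ∑ i ∈ Finset.Ico k (2*k),
          (if i < k then (n:ℝ)*(2*(k:ℝ) - 2*(i:ℝ) - 1) else 0) = 0 := by
        refine Finset.sum_eq_zero fun i hi => ?_
        rw [if_neg (by have := (Finset.mem_Ico.mp hi).1; omega)]
      rw [h1, h2, ← Finset.mul_sum, sum_lin]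
      ring
    rw [hIte]
    ring
  have hineq : ∑ a, (L a ^ 2 + 2 * (L a * ρ a)) ≤ ∑ a, v a :=
    Finset.sum_le_sum hterm
  constructor
  · rw [hform]; rw [hsumv] at hineq; linarith
  constructor
  · -- equality implies all w are the ground state
    intro hEq
    rw [hform] at hEq
    have hsum : ∑ a, (L a ^ 2 + 2 * (L a * ρ a)) = ∑ a, v a := by
      rw [hsumv]; linarith
    have hall := (Finset.sum_eq_sum_iff_of_le hterm).mp hsum
    -- deduce L a = n for a < k and L a = 0 otherwise
    have hLval : ∀ a : Fin (2*k), L a = if (a:ℕ) < k then (n:ℝ) else 0 := by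
      intro a
      have ha := hall a (Finset.mem_univ a)
      rw [hvdef] at ha
      simp only at ha
      have heq2 : 2 * (L a * ρ a)
          = (if (a:ℕ) < k then (n:ℝ)*(2*(k:ℝ) - 2*((a:ℕ):ℝ) - 1) else 0) := by
        have := hterm1 a
        have := hterm2 a
        linarith
      have h2 : L a * (2*(k:ℝ) - 2*((a:ℕ):ℝ) - 1)
          = (if (a:ℕ) < k then (n:ℝ)*(2*(k:ℝ) - 2*((a:ℕ):ℝ) - 1) else 0) := by
        rw [← heq2, ← hρval a]; ring
      by_cases hak : (a:ℕ) < k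
      · have hc : ((a:ℕ):ℝ) + 1 ≤ (k:ℝ) := by exact_mod_cast hak
        rw [if_pos hak] at h2 ⊢
        have hcne : (2*(k:ℝ) - 2*((a:ℕ):ℝ) - 1) ≠ 0 := by linarith
        exact mul_right_cancel₀ hcne h2
      · have hc : (k:ℝ) ≤ ((a:ℕ):ℝ) := by exact_mod_cast Nat.le_of_not_lt hak
        rw [if_neg hak] at h2 ⊢
        have hcne : (2*(k:ℝ) - 2*((a:ℕ):ℝ) - 1) ≠ 0 := by linarith
        exact (mul_eq_zero.mp h2).resolve_right hcne
    intro i a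
    by_cases hak : (a:ℕ) < k
    · rw [if_pos hak]
      have hLa : L a = (n:ℝ) := by rw [hLval a, if_pos hak]
      have hsum1 : ∑ j, w j a = ∑ _j : Fin n, (1:ℝ) := by
        rw [show (∑ j, w j a) = L a from rfl, hLa]; simp
      have := (Finset.sum_eq_sum_iff_of_le
        (fun j _ => by rcases hw01 j a with h | h <;> simp [h] : ∀ j ∈ Finset.univ, w j a ≤ 1)).mp hsum1
      exact this i (Finset.mem_univ i)
    · rw [if_neg hak]
      have hLa : L a = 0 := by rw [hLval a, if_neg hak]
      have := (Finset.sum_eq_zero_iff_of_nonneg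
        (fun j _ => by rcases hw01 j a with h | h <;> simp [h] : ∀ j ∈ Finset.univ, 0 ≤ w j a)).mp hLa
      exact this i (Finset.mem_univ i)
  · -- the ground state achieves equality
    intro hw
    have hLval : ∀ a : Fin (2*k), L a = if (a:ℕ) < k then (n:ℝ) else 0 := by
      intro a
      rw [show L a = ∑ i, w i a from rfl]
      by_cases hak : (a:ℕ) < k
      · rw [if_pos hak]
        rw [Finset.sum_congr rfl fun i _ => by rw [hw i a, if_pos hak]]
        simp
      · rw [if_neg hak]
        rw [Finset.sum_congr rfl fun i _ => by rw [hw i a, if_neg hak]]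
        simp
    have hsum : ∑ a, (L a ^ 2 + 2 * (L a * ρ a)) = ∑ a, v a := by
      refine Finset.sum_congr rfl fun a _ => ?_
      rw [hvdef]
      simp only
      have h2 : 2 * (L a * ρ a) = L a * (2*(k:ℝ) - 2*((a:ℕ):ℝ) - 1) := by
        rw [← hρval a]; ring
      rw [h2, hLval a]
      split_ifs with hak <;> ring
    rw [hform, hsum, hsumv]
    ring
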